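/- Let N > 0 and let H : [0, T) → R be a differentiable function satisfying H'(t) ≤ −H(t)²/N for all t ∈ [0, T), with H(0) < 0. Then for every t ∈ [0, T) one has N + H(0) t > 0 and H(t) ≤ N H(0) / ( N + H(0) t ); consequently T ≤ −N/H(0), and no such differentiable function exists on all of [0, ∞). -/

import Mathlib

open Real Set

lemma riccati_aux (N T : ℝ) (hN : 0 < N) (H : ℝ → ℝ)
    (hdiff : ∀ t ∈ Ico (0 : ℝ) T, DifferentiableAt ℝ H t)
    (hineq : ∀ t ∈ Ico (0 : ℝ) T, deriv H t ≤ -(H t) ^ 2 / N)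
    (hH0 : H 0 < 0) :
    ∀ t ∈ Ico (0 : ℝ) T, 0 < N + H 0 * t ∧ H t ≤ N * H 0 / (N + H 0 * t) := by
  intro t ht
  have hT : 0 < T := lt_of_le_of_lt ht.1 ht.2
  have h0mem : (0 : ℝ) ∈ Ico (0 : ℝ) T := ⟨le_refl 0, hT⟩
  have hcont : ContinuousOn H (Ico 0 T) :=
    fun x hx => (hdiff x hx).continuousAt.continuousWithinAt
  have hanti : AntitoneOn H (Ico 0 T) := by
    apply antitoneOn_of_deriv_nonpos (convex_Ico 0 T) hcont
    · rw [interior_Ico]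
      intro x hx
      exact ((hdiff x (Ioo_subset_Ico_self hx)).differentiableWithinAt)
    · rw [interior_Ico]
      intro x hx
      have h1 := hineq x (Ioo_subset_Ico_self hx)
      have h2 : -(H x) ^ 2 / N ≤ 0 :=
        div_nonpos_of_nonpos_of_nonneg (neg_nonpos.mpr (sq_nonneg _)) hN.le
      linarith
  have hneg : ∀ s ∈ Ico (0 : ℝ) T, H s < 0 :=
    fun s hs => lt_of_le_of_lt (hanti h0mem hs hs.1) hH0
  -- monotonicity of g = 1/H - t/N
  set g : ℝ → ℝ := fun s => (H s)⁻¹ - s / N with hg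
  have hgderiv : ∀ x ∈ Ioo (0 : ℝ) T,
      HasDerivAt g (-(deriv H x) / (H x) ^ 2 - 1 / N) x := by
    intro x hx
    have hx' := Ioo_subset_Ico_self hx
    have h1 : HasDerivAt (fun s => (H s)⁻¹) (-(deriv H x) / (H x) ^ 2) x :=
      ((hdiff x hx').hasDerivAt).inv (ne_of_lt (hneg x hx'))
    have h2 : HasDerivAt (fun s : ℝ => s / N) (1 / N) x := by
      simpa using (hasDerivAt_id x).div_const N
    exact h1.sub h2
  have hmono : MonotoneOn g (Ico 0 T) := by
    apply monotoneOn_of_deriv_nonneg (convex_Ico 0 T)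
    · exact (hcont.inv₀ (fun x hx => ne_of_lt (hneg x hx))).sub
        ((continuous_id.div_const N).continuousOn)
    · rw [interior_Ico]
      intro x hx
      exact (hgderiv x hx).differentiableAt.differentiableWithinAt
    · rw [interior_Ico]
      intro x hx
      rw [(hgderiv x hx).deriv]
      have hx' := Ioo_subset_Ico_self hx
      have hHx := hneg x hx'
      have hs : 0 < (H x) ^ 2 := by nlinarith
      have h1 : deriv H x * N ≤ -(H x) ^ 2 := by
        have := hineq x hx'
        exact (le_div_iff₀ hN).mp this
      rw [sub_nonneg, div_le_div_iff₀ hN hs]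
      nlinarith
  have hkey := hmono h0mem ht ht.1
  simp only [hg] at hkey
  have hinv : (H 0)⁻¹ + t / N ≤ (H t)⁻¹ := by
    have : (0 : ℝ) / N = 0 := by simp
    simp at hkey
    linarith
  have hHt := hneg t ht
  have hH0ne : H 0 ≠ 0 := ne_of_lt hH0
  have hNne : N ≠ 0 := ne_of_gt hN
  have hNH0 : N * H 0 < 0 := mul_neg_of_pos_of_neg hN hH0
  have hcomp : (H 0)⁻¹ + t / N = (N + H 0 * t) / (N * H 0) := by
    field_simp
  rw [hcomp] at hinv
  have hinvneg : (H t)⁻¹ < 0 := inv_neg''.mpr hHt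
  have hfrac : (N + H 0 * t) / (N * H 0) < 0 := lt_of_le_of_lt hinv hinvneg
  have hpos : 0 < N + H 0 * t := by
    rcases div_neg_iff.mp hfrac with ⟨h1, h2⟩ | ⟨h1, h2⟩
    · exact h1
    · linarith
  refine ⟨hpos, ?_⟩
  rw [le_div_iff₀ hpos]
  have hpr : 0 < N * H 0 * H t := mul_pos_of_neg_of_neg hNH0 hHt
  have hmul := mul_le_mul_of_nonneg_right hinv hpr.le
  have l1 : (N + H 0 * t) / (N * H 0) * (N * H 0 * H t) = (N + H 0 * t) * H t := by
    field_simp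
  have l2 : (H t)⁻¹ * (N * H 0 * H t) = N * H 0 := by
    field_simp
    exact div_self (ne_of_lt hHt)
  rw [l1, l2] at hmul
  nlinarith [hmul]

lemma riccati_aux2 (N T : ℝ) (hN : 0 < N) (H : ℝ → ℝ)
    (hdiff : ∀ t ∈ Ico (0 : ℝ) T, DifferentiableAt ℝ H t)
    (hineq : ∀ t ∈ Ico (0 : ℝ) T, deriv H t ≤ -(H t) ^ 2 / N)
    (hH0 : H 0 < 0) : T ≤ -N / H 0 := by
  by_contra hlt
  push_neg at hlt
  have hpos : 0 < -N / H 0 := div_pos_of_neg_of_neg (by linarith) hH0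
  have hmem : -N / H 0 ∈ Ico (0 : ℝ) T := ⟨hpos.le, hlt⟩
  obtain ⟨h1, _⟩ := riccati_aux N T hN H hdiff hineq hH0 (-N / H 0) hmem
  have h2 : H 0 * (-N / H 0) = -N := by
    rw [mul_comm, div_mul_cancel₀ _ (ne_of_lt hH0)]
  rw [h2] at h1
  linarith

/-- Let `N > 0` and let `H : [0,T) → ℝ` be differentiable with
`H'(t) ≤ −H(t)²/N` on `[0,T)` and `H(0) < 0`. Then for every `t ∈ [0,T)` one has
`N + H(0) t > 0` and `H(t) ≤ N H(0)/(N + H(0) t)`; consequently `T ≤ −N/H(0)`,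
and no such differentiable function exists on all of `[0,∞)`. -/
theorem riccati_inequality_negative_initial_blowup
    (N T : ℝ) (hN : 0 < N) (H : ℝ → ℝ)
    (hdiff : ∀ t ∈ Ico (0 : ℝ) T, DifferentiableAt ℝ H t)
    (hineq : ∀ t ∈ Ico (0 : ℝ) T, deriv H t ≤ -(H t) ^ 2 / N)
    (hH0 : H 0 < 0) :
    (∀ t ∈ Ico (0 : ℝ) T, 0 < N + H 0 * t ∧ H t ≤ N * H 0 / (N + H 0 * t)) ∧
    T ≤ -N / H 0 ∧
    ¬∃ G : ℝ → ℝ, G 0 < 0 ∧ ∀ t ∈ Ici (0 : ℝ),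
      DifferentiableAt ℝ G t ∧ deriv G t ≤ -(G t) ^ 2 / N := by
  refine ⟨riccati_aux N T hN H hdiff hineq hH0,
    riccati_aux2 N T hN H hdiff hineq hH0, ?_⟩
  rintro ⟨G, hG0, hG⟩
  have hb := riccati_aux2 N (-N / G 0 + 1) hN G
    (fun t ht => (hG t ht.1).1) (fun t ht => (hG t ht.1).2) hG0
  linarith
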